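/- Let ℋ = Σ_{i=1}^M p_i (I + s_i P_i)/2 be an N-qubit Hamiltonian with p_i > 0, Σ p_i = 1, s_i ∈ {+1,−1}, and each P_i a tensor product of Paulis with between 1 and 5 non-identity factors. Consider the verification procedure: sample i with probability p_i; sample (W_1,...,W_N) uniformly from {X,Y,Z}^N and S_V uniformly among subsets of [N] of size in [1,5]; accept automatically if P_i is inconsistent with (S_V,{W_j}) or a biased coin with heads-probability 1 − 3^{|S_i|−5} lands heads; otherwise measure the qubits of ρ indexed by S_i in the bases given by P_i with outcomes m'_j and accept iff (−1)^{⊕_{j∈S_i} m'_j} = −s_i. Then for any N-qubit density matrix ρ, the acceptance probability equals 1 − Tr(ρℋ)/N', where N' = 3^5 Σ_{i=1}^5 C(N,i). -/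

import Mathlib

open Matrix Finset
open scoped Kronecker Classical BigOperators ComplexOrder

noncomputable section

def pX : Matrix (Fin 2) (Fin 2) ℂ := !![0, 1; 1, 0]
def pY : Matrix (Fin 2) (Fin 2) ℂ := !![0, -Complex.I; Complex.I, 0]
def pZ : Matrix (Fin 2) (Fin 2) ℂ := !![1, 0; 0, -1]
def pH : Matrix (Fin 2) (Fin 2) ℂ := (Real.sqrt 2 : ℂ)⁻¹ • !![1, 1; 1, -1]

/-- Tensor product of `N` single-qubit operators, as an operator on `N` qubits. -/
def tensorOp (N : ℕ) (M : Fin N → Matrix (Fin 2) (Fin 2) ℂ) :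
    Matrix (Fin N → Fin 2) (Fin N → Fin 2) ℂ :=
  Matrix.of fun f g => ∏ j, M j (f j) (g j)

/-- Projector onto the eigenvector of the Pauli `P` with eigenvalue `(-1)^m`. -/
def pauliProj (P : Matrix (Fin 2) (Fin 2) ℂ) (m : Fin 2) : Matrix (Fin 2) (Fin 2) ℂ :=
  (1 / 2 : ℂ) • (1 + ((-1 : ℂ) ^ (m : ℕ)) • P)

/-- `X^x Z^z` on `N` qubits. -/
def XZ (N : ℕ) (x z : Fin N → Fin 2) : Matrix (Fin N → Fin 2) (Fin N → Fin 2) ℂ :=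
  tensorOp N fun j => pX ^ (x j : ℕ) * pZ ^ (z j : ℕ)

/-- `Z^z X^x` on `N` qubits. -/
def ZX (N : ℕ) (x z : Fin N → Fin 2) : Matrix (Fin N → Fin 2) (Fin N → Fin 2) ℂ :=
  tensorOp N fun j => pZ ^ (z j : ℕ) * pX ^ (x j : ℕ)

/-- Pauli operator indexed by `Fin 4` (`0 ↦ I`, `1 ↦ X`, `2 ↦ Y`, `3 ↦ Z`). -/
def pauliOf : Fin 4 → Matrix (Fin 2) (Fin 2) ℂ :=
  fun k => if k = 0 then 1 else if k = 1 then pX else if k = 2 then pY else pZ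

/-- Amplitudes of `N` Bell pairs shared between two `N`-qubit registers. -/
def bellVec (N : ℕ) : (Fin N → Fin 2) × (Fin N → Fin 2) → ℂ :=
  fun q => if q.1 = q.2 then ((Real.sqrt 2 : ℂ)⁻¹) ^ N else 0

/-- Amplitudes of the two-qubit Bell basis state `|φ_{x,z}⟩ = (I ⊗ X^x Z^z)(|00⟩+|11⟩)/√2`. -/
def bellPairVec (x z : Fin 2) : Fin 2 × Fin 2 → ℂ :=
  fun q => (Real.sqrt 2 : ℂ)⁻¹ * (pX ^ (x : ℕ) * pZ ^ (z : ℕ)) q.2 q.1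

/-- Eigenvector with eigenvalue `(-1)^m` of the Pauli basis `w` (`0 ↦ X`, `1 ↦ Y`, `2 ↦ Z`). -/
def basisVec : Fin 3 → Fin 2 → Fin 2 → ℂ := fun w m k =>
  if w = 0 then (Real.sqrt 2 : ℂ)⁻¹ * (-1 : ℂ) ^ ((m : ℕ) * (k : ℕ))
  else if w = 1 then
    (if k = 0 then (Real.sqrt 2 : ℂ)⁻¹ else (-1 : ℂ) ^ (m : ℕ) * Complex.I * (Real.sqrt 2 : ℂ)⁻¹)
  else (if k = m then 1 else 0)

lemma prod_one_entry (N : ℕ) (f g : Fin N → Fin 2) :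
    (∏ j, (1 : Matrix (Fin 2) (Fin 2) ℂ) (f j) (g j)) = (1 : Matrix (Fin N → Fin 2) (Fin N → Fin 2) ℂ) f g := by
  rw [show (∏ j, (1 : Matrix (Fin 2) (Fin 2) ℂ) (f j) (g j)) = ∏ j, if f j = g j then (1:ℂ) else 0 from
    Finset.prod_congr rfl fun j _ => by simp [Matrix.one_apply]]
  rw [Finset.prod_boole, Matrix.one_apply]
  simp [funext_iff]

lemma key (N : ℕ) (S : Finset (Fin N)) (Q : Fin N → Matrix (Fin 2) (Fin 2) ℂ) (ε : ℤ)
    (hε : ε = 1 ∨ ε = -1) :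
    ∑ m ∈ Finset.univ.filter (fun m : Fin N → Fin 2 =>
        (∀ j, j ∉ S → m j = 0) ∧ (-1 : ℤ) ^ (∑ j ∈ S, (m j : ℕ)) = ε),
      tensorOp N (fun j => if j ∈ S then pauliProj (Q j) (m j) else 1)
    = (1 / 2 : ℂ) • ((1 : Matrix (Fin N → Fin 2) (Fin N → Fin 2) ℂ)
        + (ε : ℂ) • tensorOp N (fun j => if j ∈ S then Q j else 1)) := by
  ext f g
  set G : Fin N → Fin 2 → ℂ := fun j x => if j ∈ S then pauliProj (Q j) x (f j) (g j)
      else (if x = 0 then (1 : Matrix (Fin 2) (Fin 2) ℂ) (f j) (g j) else 0) with hG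
  set H : Fin N → Fin 2 → ℂ := fun j x => if j ∈ S then ((-1:ℂ)^(x:ℕ)) * pauliProj (Q j) x (f j) (g j)
      else (if x = 0 then (1 : Matrix (Fin 2) (Fin 2) ℂ) (f j) (g j) else 0) with hH
  have claim : ∀ m : Fin N → Fin 2,
      (if ((∀ j, j ∉ S → m j = 0) ∧ (-1 : ℤ) ^ (∑ j ∈ S, (m j : ℕ)) = ε)
       then (tensorOp N (fun j => if j ∈ S then pauliProj (Q j) (m j) else 1)) f g else 0)
      = (1/2 : ℂ) * ∏ j, G j (m j) + (ε : ℂ)/2 * ∏ j, H j (m j) := by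
    intro m
    by_cases hm : ∀ j, j ∉ S → m j = 0
    · have hGA : ∀ j, G j (m j)
          = (if j ∈ S then pauliProj (Q j) (m j) else 1) (f j) (g j) := by
        intro j; by_cases hj : j ∈ S
        · simp [hG, hj]
        · simp [hG, hj, hm j hj]
      have hHA : ∀ j, H j (m j)
          = (if j ∈ S then ((-1:ℂ)^((m j : ℕ))) else 1)
            * (if j ∈ S then pauliProj (Q j) (m j) else 1) (f j) (g j) := by
        intro j; by_cases hj : j ∈ S
        · simp [hH, hj]
        · simp [hH, hj, hm j hj]
      have hprodG : (∏ j, G j (m j))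
          = ∏ j, (if j ∈ S then pauliProj (Q j) (m j) else 1) (f j) (g j) :=
        Finset.prod_congr rfl fun j _ => hGA j
      have hsign : (∏ j, (if j ∈ S then ((-1:ℂ)^((m j : ℕ))) else 1))
          = ((-1:ℂ)) ^ (∑ j ∈ S, (m j : ℕ)) := by
        rw [Finset.prod_ite_mem, Finset.univ_inter, Finset.prod_pow_eq_pow_sum]
      have hprodH : (∏ j, H j (m j))
          = ((-1:ℂ)) ^ (∑ j ∈ S, (m j : ℕ))
            * ∏ j, (if j ∈ S then pauliProj (Q j) (m j) else 1) (f j) (g j) := by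
        rw [Finset.prod_congr rfl fun j _ => hHA j, Finset.prod_mul_distrib, hsign]
      have hcastC : ((-1:ℂ)) ^ (∑ j ∈ S, (m j : ℕ))
          = (((-1:ℤ) ^ (∑ j ∈ S, (m j : ℕ)) : ℤ) : ℂ) := by push_cast; ring
      rw [hprodG, hprodH, tensorOp]
      simp only [Matrix.of_apply]
      by_cases hpar : (-1 : ℤ) ^ (∑ j ∈ S, (m j : ℕ)) = ε
      · rw [if_pos ⟨hm, hpar⟩, hcastC, hpar]
        rcases hε with h | h <;> subst h <;> push_cast <;> ring
      · rw [if_neg (by tauto), hcastC]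
        have : (-1 : ℤ) ^ (∑ j ∈ S, (m j : ℕ)) = -ε := by
          rcases Nat.even_or_odd (∑ j ∈ S, (m j : ℕ)) with he | ho
          · rw [he.neg_one_pow] at hpar ⊢; rcases hε with h | h <;> omega
          · rw [ho.neg_one_pow] at hpar ⊢; rcases hε with h | h <;> omega
        rw [this]
        rcases hε with h | h <;> subst h <;> push_cast <;> ring
    · push_neg at hm
      obtain ⟨j, hjS, hmj⟩ := hm
      have hmj1 : m j = 1 := by omega
      have g0 : G j (m j) = 0 := by simp [hG, hjS, hmj1]
      have h0 : H j (m j) = 0 := by simp [hH, hjS, hmj1]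
      rw [if_neg (by tauto), Finset.prod_eq_zero (Finset.mem_univ j) g0,
        Finset.prod_eq_zero (Finset.mem_univ j) h0]
      ring
  rw [Matrix.sum_apply, Finset.sum_filter, Finset.sum_congr rfl fun m _ => claim m,
    Finset.sum_add_distrib, ← Finset.mul_sum, ← Finset.mul_sum]
  have swapG : ∑ m : Fin N → Fin 2, ∏ j, G j (m j) = ∏ j, ∑ x : Fin 2, G j x := by
    rw [Finset.prod_univ_sum, Fintype.piFinset_univ]
  have swapH : ∑ m : Fin N → Fin 2, ∏ j, H j (m j) = ∏ j, ∑ x : Fin 2, H j x := by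
    rw [Finset.prod_univ_sum, Fintype.piFinset_univ]
  have G0 : ∀ j, (∑ x : Fin 2, G j x) = (1 : Matrix (Fin 2) (Fin 2) ℂ) (f j) (g j) := by
    intro j
    rw [Fin.sum_univ_two]
    by_cases hj : j ∈ S
    · simp only [hG, hj, if_true, pauliProj, Matrix.smul_apply, Matrix.add_apply,
        Matrix.one_apply, Fin.val_zero, Fin.val_one, pow_zero, pow_one, Matrix.smul_apply,
        smul_eq_mul]
      ring
    · simp [hG, hj]
  have H0 : ∀ j, (∑ x : Fin 2, H j x) = (if j ∈ S then Q j else 1) (f j) (g j) := by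
    intro j
    rw [Fin.sum_univ_two]
    by_cases hj : j ∈ S
    · simp only [hH, hj, if_true, pauliProj, Matrix.smul_apply, Matrix.add_apply,
        Matrix.one_apply, Fin.val_zero, Fin.val_one, pow_zero, pow_one, smul_eq_mul]
      ring
    · simp [hH, hj]
  rw [swapG, swapH, Finset.prod_congr rfl fun j _ => G0 j,
    Finset.prod_congr rfl fun j _ => H0 j, prod_one_entry]
  simp only [Matrix.smul_apply, Matrix.add_apply, tensorOp, Matrix.of_apply, smul_eq_mul]
  ring

lemma Ssp_card (N : ℕ) :
    (Finset.univ.filter fun S : Finset (Fin N) => 1 ≤ S.card ∧ S.card ≤ 5).card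
      = ∑ i ∈ Finset.Icc 1 5, N.choose i := by
  have h : (Finset.univ.filter fun S : Finset (Fin N) => 1 ≤ S.card ∧ S.card ≤ 5)
      = (Finset.Icc 1 5).biUnion
          (fun k => Finset.powersetCard k (Finset.univ : Finset (Fin N))) := by
    ext S
    simp only [Finset.mem_filter, Finset.mem_univ, true_and, Finset.mem_biUnion,
      Finset.mem_Icc, Finset.mem_powersetCard]
    constructor
    · rintro ⟨h1, h2⟩; exact ⟨S.card, ⟨h1, h2⟩, Finset.subset_univ S, rfl⟩
    · rintro ⟨k, hk, _, rfl⟩; exact hk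
  rw [h, Finset.card_biUnion]
  · exact Finset.sum_congr rfl fun k _ => by
      rw [Finset.card_powersetCard, Finset.card_fin]
  · intro a _ b _ hab
    simp only [Finset.disjoint_left, Finset.mem_powersetCard]
    rintro S ⟨_, h1⟩ ⟨_, h2⟩
    exact hab (h1.symm.trans h2)

lemma consistent_card (N : ℕ) (S : Finset (Fin N)) (Pi : Fin N → Fin 4)
    (hS : S = Finset.univ.filter fun j => Pi j ≠ 0) :
    (Finset.univ.filter fun w : Fin N → Fin 3 =>
      ∀ j ∈ S, ((w j : ℕ) + 1) = (Pi j : ℕ)).card = 3 ^ (N - S.card) := by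
  have hP : ∀ j ∈ S, 1 ≤ (Pi j : ℕ) ∧ (Pi j : ℕ) ≤ 3 := by
    intro j hj
    rw [hS, Finset.mem_filter] at hj
    have := hj.2
    have h4 : (Pi j : ℕ) < 4 := (Pi j).isLt
    have h0 : (Pi j : ℕ) ≠ 0 := fun h => this (Fin.ext h)
    omega
  set w₀ : Fin N → Fin 3 := fun j => ⟨min ((Pi j : ℕ) - 1) 2, by omega⟩ with hw₀
  have hiff : ∀ j ∈ S, ∀ w : Fin N → Fin 3, (((w j : ℕ) + 1) = (Pi j : ℕ) ↔ w j = w₀ j) := by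
    intro j hj w
    have := hP j hj
    constructor
    · intro h; apply Fin.ext; simp only [hw₀]; omega
    · intro h; rw [h]; simp only [hw₀]; omega
  have hfil : (Finset.univ.filter fun w : Fin N → Fin 3 =>
      ∀ j ∈ S, ((w j : ℕ) + 1) = (Pi j : ℕ))
      = Fintype.piFinset (fun j => if j ∈ S then {w₀ j} else Finset.univ) := by
    ext w
    simp only [Finset.mem_filter, Finset.mem_univ, true_and, Fintype.mem_piFinset]
    constructor
    · intro h j
      by_cases hj : j ∈ S
      · simp [hj, (hiff j hj w).mp (h j hj)]
      · simp [hj]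
    · intro h j hj
      have := h j
      rw [if_pos hj, Finset.mem_singleton] at this
      exact (hiff j hj w).mpr this
  rw [hfil, Fintype.card_piFinset]
  have : ∀ j : Fin N, (if j ∈ S then ({w₀ j} : Finset (Fin 3)) else Finset.univ).card
      = if j ∈ S then 1 else 3 := by
    intro j; by_cases hj : j ∈ S <;> simp [hj]
  rw [Finset.prod_congr rfl fun j _ => this j, Finset.prod_ite, Finset.prod_const_one,
    Finset.prod_const, one_mul]
  congr 1
  have : Finset.univ.filter (fun j : Fin N => ¬ j ∈ S) = Sᶜ := by ext j; simp
  rw [this, Finset.card_compl, Fintype.card_fin]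

theorem stmt_8 (N M : ℕ) (hN : 1 ≤ N)
    (p : Fin M → ℝ) (hp : ∀ i, 0 < p i) (hpsum : ∑ i, p i = 1)
    (s : Fin M → ℤ) (hs : ∀ i, s i = 1 ∨ s i = -1)
    (P : Fin M → Fin N → Fin 4)
    (supp : Fin M → Finset (Fin N))
    (hsupp : ∀ i, supp i = Finset.univ.filter fun j => P i j ≠ 0)
    (hk1 : ∀ i, 1 ≤ (supp i).card) (hk5 : ∀ i, (supp i).card ≤ 5)
    (ρ : Matrix (Fin N → Fin 2) (Fin N → Fin 2) ℂ)
    (hρ : ρ.PosSemidef) (hρtr : ρ.trace = 1)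
    (Ham : Matrix (Fin N → Fin 2) (Fin N → Fin 2) ℂ)
    (hHam : Ham = ∑ i, ((p i : ℝ) : ℂ) •
      ((1 / 2 : ℂ) • (1 + (s i : ℂ) • tensorOp N fun j => pauliOf (P i j)))) :
    -- sample space of subsets S_V with 1 ≤ |S_V| ≤ 5
    let Ssp : Finset (Finset (Fin N)) :=
      Finset.univ.filter fun S => 1 ≤ S.card ∧ S.card ≤ 5
    -- consistency of P_i with (S_V, {W_j})  (W : Fin 3 with 0 ↦ X, 1 ↦ Y, 2 ↦ Z)
    let consistent : Fin M → (Fin N → Fin 3) → Finset (Fin N) → Prop :=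
      fun i w S => S = supp i ∧ ∀ j ∈ supp i, ((w j : ℕ) + 1) = (P i j : ℕ)
    -- probability of accepting in the measurement step for the term i
    let measAcc : Fin M → ℂ := fun i =>
      ∑ m ∈ Finset.univ.filter (fun m : Fin N → Fin 2 =>
          (∀ j, j ∉ supp i → m j = 0) ∧
          (-1 : ℤ) ^ (∑ j ∈ supp i, (m j : ℕ)) = -(s i)),
        (tensorOp N (fun j =>
            if j ∈ supp i then pauliProj (pauliOf (P i j)) (m j) else 1) * ρ).trace
    -- total acceptance probability of the verification procedure
    (∑ i, ((p i : ℝ) : ℂ) * (((3 : ℂ) ^ N * (Ssp.card : ℂ))⁻¹ *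
        ∑ q ∈ (Finset.univ : Finset (Fin N → Fin 3)) ×ˢ Ssp,
          (if consistent i q.1 q.2 then
              (1 - (3 : ℂ) ^ (((supp i).card : ℤ) - 5)) +
                (3 : ℂ) ^ (((supp i).card : ℤ) - 5) * measAcc i
            else 1)))
      = 1 - (ρ * Ham).trace / ((3 ^ 5 * ∑ i ∈ Finset.Icc 1 5, N.choose i : ℕ) : ℂ) := by
  intro Ssp consistent measAcc
  have h3 : (3:ℂ) ≠ 0 := by norm_num
  have hSspcard : Ssp.card = ∑ i ∈ Finset.Icc 1 5, N.choose i := Ssp_card N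
  have hposcard : 0 < Ssp.card := by
    rw [hSspcard]
    calc 0 < N := hN
    _ = N.choose 1 := (Nat.choose_one_right N).symm
    _ ≤ ∑ i ∈ Finset.Icc 1 5, N.choose i :=
        Finset.single_le_sum (fun i _ => Nat.zero_le _) (by simp)
  set c₀ : ℂ := (Ssp.card : ℂ) with hc₀def
  have hc₀ : c₀ ≠ 0 := Nat.cast_ne_zero.mpr hposcard.ne'
  have hD : (3:ℂ)^N * c₀ ≠ 0 := mul_ne_zero (pow_ne_zero _ h3) hc₀
  have hE : (3:ℂ)^5 * c₀ ≠ 0 := mul_ne_zero (pow_ne_zero _ h3) hc₀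
  have hterm : ∀ i : Fin M, ((p i : ℝ) : ℂ) * (((3 : ℂ) ^ N * c₀)⁻¹ *
        ∑ q ∈ (Finset.univ : Finset (Fin N → Fin 3)) ×ˢ Ssp,
          (if consistent i q.1 q.2 then
              (1 - (3 : ℂ) ^ (((supp i).card : ℤ) - 5)) +
                (3 : ℂ) ^ (((supp i).card : ℤ) - 5) * measAcc i
            else 1))
      = ((p i : ℝ) : ℂ) - ((p i : ℝ) : ℂ) *
          ((ρ * ((1 / 2 : ℂ) • (1 + (s i : ℂ) • tensorOp N fun j => pauliOf (P i j)))).trace)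
          * ((3:ℂ)^5 * c₀)⁻¹ := by
    intro i
    have hkN : (supp i).card ≤ N := by
      have := Finset.card_le_univ (supp i)
      simpa using this
    set t : ℂ := (3:ℂ)^((((supp i).card):ℤ)-5) with ht
    set T := tensorOp N (fun j => pauliOf (P i j)) with hT
    have hTeq : tensorOp N (fun j => if j ∈ supp i then pauliOf (P i j) else 1) = T := by
      rw [hT]
      have hfun : (fun j => if j ∈ supp i then pauliOf (P i j) else 1)
          = fun j => pauliOf (P i j) := by
        funext j
        by_cases hj : j ∈ supp i
        · simp [hj]
        · have hP0 : P i j = 0 := by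
            rw [hsupp i, Finset.mem_filter] at hj
            push_neg at hj
            exact hj (Finset.mem_univ j)
          simp [hj, hP0, pauliOf]
      rw [hfun]
    have hε : -(s i) = 1 ∨ -(s i) = -1 := by rcases hs i with h | h <;> [right; left] <;> omega
    have hkey := key N (supp i) (fun j => pauliOf (P i j)) (-(s i)) hε
    have hmeas : measAcc i = (1/2 : ℂ) * (1 + (-(s i) : ℤ) * (T * ρ).trace) := by
      have h0 : measAcc i = ∑ m ∈ Finset.univ.filter (fun m : Fin N → Fin 2 =>
          (∀ j, j ∉ supp i → m j = 0) ∧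
          (-1 : ℤ) ^ (∑ j ∈ supp i, (m j : ℕ)) = -(s i)),
        (tensorOp N (fun j =>
            if j ∈ supp i then pauliProj (pauliOf (P i j)) (m j) else 1) * ρ).trace := rfl
      rw [h0, ← Matrix.trace_sum, ← Finset.sum_mul, hkey, hTeq, Matrix.smul_mul,
        Matrix.trace_smul, Matrix.add_mul, Matrix.one_mul, Matrix.trace_add, Matrix.smul_mul,
        Matrix.trace_smul, hρtr]
      try simp only [smul_eq_mul]
      try push_cast
      try ring
    have hHterm : ((ρ * ((1 / 2 : ℂ) • (1 + (s i : ℂ) • T))).trace)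
        = (1/2 : ℂ) * (1 + (s i : ℤ) * (T * ρ).trace) := by
      rw [Matrix.mul_smul, Matrix.trace_smul, Matrix.mul_add, Matrix.mul_one, Matrix.trace_add,
        Matrix.mul_smul, Matrix.trace_smul, hρtr, Matrix.trace_mul_comm]
      try simp only [smul_eq_mul]
      try push_cast
      try ring
    have hm1 : measAcc i - 1 = -((ρ * ((1 / 2 : ℂ) • (1 + (s i : ℂ) • T))).trace) := by
      rw [hmeas, hHterm]; push_cast; ring
    have hSmem : supp i ∈ Ssp := by
      simp only [Ssp, Finset.mem_filter, Finset.mem_univ, true_and]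
      exact ⟨hk1 i, hk5 i⟩
    have hfilter : ((Finset.univ : Finset (Fin N → Fin 3)) ×ˢ Ssp).filter
        (fun q => consistent i q.1 q.2)
        = (Finset.univ.filter fun w : Fin N → Fin 3 =>
            ∀ j ∈ supp i, ((w j : ℕ) + 1) = (P i j : ℕ)) ×ˢ {supp i} := by
      ext q
      simp only [consistent, Finset.mem_filter, Finset.mem_product, Finset.mem_univ, true_and,
        Finset.mem_singleton]
      constructor
      · rintro ⟨_, h1, h2⟩
        exact ⟨h2, h1⟩
      · rintro ⟨h2, h1⟩
        exact ⟨h1 ▸ hSmem, h1, h2⟩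
    have hWcard := consistent_card N (supp i) (P i) (hsupp i)
    set A : ℂ := (1 - t) + t * measAcc i with hA
    have hprodcard : (((Finset.univ : Finset (Fin N → Fin 3)) ×ˢ Ssp).card : ℂ)
        = (3:ℂ)^N * c₀ := by
      rw [Finset.card_product, Finset.card_univ]
      have : Fintype.card (Fin N → Fin 3) = 3 ^ N := by
        simp [Fintype.card_fun]
      rw [this]
      push_cast
      ring
    have hsumq : ∑ q ∈ (Finset.univ : Finset (Fin N → Fin 3)) ×ˢ Ssp,
        (if consistent i q.1 q.2 then A else 1)
        = (3:ℂ)^N * c₀ + ((3:ℕ)^(N-(supp i).card) : ℂ) * (A - 1) := by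
      rw [Finset.sum_ite, Finset.sum_const, Finset.sum_const]
      have hsplit := Finset.card_filter_add_card_filter_not
        (s := (Finset.univ : Finset (Fin N → Fin 3)) ×ˢ Ssp)
        (p := fun q => consistent i q.1 q.2)
      have hcf : (((Finset.univ : Finset (Fin N → Fin 3)) ×ˢ Ssp).filter
          (fun q => consistent i q.1 q.2)).card = 3^(N-(supp i).card) := by
        rw [hfilter, Finset.card_product, Finset.card_singleton, mul_one, hWcard]
      rw [hcf] at hsplit ⊢
      have hncf : ((((Finset.univ : Finset (Fin N → Fin 3)) ×ˢ Ssp).filter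
          (fun q => ¬ consistent i q.1 q.2)).card : ℂ)
          = (3:ℂ)^N * c₀ - ((3:ℕ)^(N-(supp i).card) : ℂ) := by
        have hb : (((Finset.univ : Finset (Fin N → Fin 3)) ×ˢ Ssp).filter
            (fun q => ¬ consistent i q.1 q.2)).card
            = ((Finset.univ : Finset (Fin N → Fin 3)) ×ˢ Ssp).card - 3^(N-(supp i).card) :=
          Nat.eq_sub_of_add_eq' hsplit
        have hle : 3^(N-(supp i).card) ≤ ((Finset.univ : Finset (Fin N → Fin 3)) ×ˢ Ssp).card :=
          Nat.le.intro hsplit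
        rw [hb, Nat.cast_sub hle, hprodcard]
        push_cast
        ring
      rw [nsmul_eq_mul, nsmul_eq_mul, hncf]
      push_cast
      ring
    have hzp : ((3:ℕ)^(N-(supp i).card) : ℂ) * t = (3:ℂ)^((N:ℤ)-5) := by
      have h1 : ((3:ℕ)^(N-(supp i).card) : ℂ) = (3:ℂ)^(((N-(supp i).card : ℕ)):ℤ) := by
        rw [zpow_natCast]
        push_cast
        ring
      rw [h1, ht, ← zpow_add₀ h3]
      congr 1
      rw [Nat.cast_sub hkN]
      ring
    have hfrac : ((3:ℂ)^N * c₀)⁻¹ * (((3:ℕ)^(N-(supp i).card) : ℂ) * t) = ((3:ℂ)^5 * c₀)⁻¹ := by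
      rw [hzp]
      have h4 : (3:ℂ)^((N:ℤ)-5) = (3:ℂ)^(N:ℕ) / (3:ℂ)^5 := by
        rw [zpow_sub₀ h3, zpow_natCast]
        norm_num
      rw [h4]
      field_simp
    have hA1 : A - 1 = t * (measAcc i - 1) := by rw [hA]; ring
    rw [hsumq, hA1, hm1]
    have : ((3:ℂ)^N * c₀)⁻¹ * ((3:ℂ)^N * c₀ + ((3:ℕ)^(N-(supp i).card) : ℂ) *
        (t * -((ρ * ((1 / 2 : ℂ) • (1 + (s i : ℂ) • T))).trace)))
        = 1 - ((3:ℂ)^5 * c₀)⁻¹ * ((ρ * ((1 / 2 : ℂ) • (1 + (s i : ℂ) • T))).trace) := by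
      rw [mul_add, inv_mul_cancel₀ hD]
      have : ((3:ℂ)^N * c₀)⁻¹ * (((3:ℕ)^(N-(supp i).card) : ℂ) *
          (t * -((ρ * ((1 / 2 : ℂ) • (1 + (s i : ℂ) • T))).trace)))
          = -(((3:ℂ)^N * c₀)⁻¹ * (((3:ℕ)^(N-(supp i).card) : ℂ) * t)
              * ((ρ * ((1 / 2 : ℂ) • (1 + (s i : ℂ) • T))).trace)) := by ring
      rw [this, hfrac]
      ring
    rw [this]
    ring
  have hps : ∑ i : Fin M, ((p i : ℝ) : ℂ) = 1 := by
    rw [← Complex.ofReal_sum, hpsum, Complex.ofReal_one]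
  have htr : (ρ * Ham).trace = ∑ i : Fin M, ((p i : ℝ) : ℂ) *
      ((ρ * ((1 / 2 : ℂ) • (1 + (s i : ℂ) • tensorOp N fun j => pauliOf (P i j)))).trace) := by
    rw [hHam, Finset.mul_sum, Matrix.trace_sum]
    refine Finset.sum_congr rfl fun i _ => ?_
    rw [Matrix.mul_smul, Matrix.trace_smul, smul_eq_mul]
  have hden : ((3 ^ 5 * ∑ i ∈ Finset.Icc 1 5, N.choose i : ℕ) : ℂ) = (3:ℂ)^5 * c₀ := by
    rw [hc₀def, hSspcard]
    push_cast
    ring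
  rw [Finset.sum_congr rfl fun i _ => hterm i, Finset.sum_sub_distrib, hps, htr, hden,
    Finset.sum_div]
  congr 1
  try exact Finset.sum_congr rfl fun i _ => (div_eq_mul_inv _ _).symm
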